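/- Let α ∈ (0,1], c > 0, let n₀ ≥ 1 be an integer, and let (rₙ)_{n≥1} be a summable sequence of non-negative real numbers such that rₙ ≥ c n^{−2α−1} for all n ≥ n₀. Then for all real r with 0 < r ≤ min(0.035, 1/n₀): 2 ∑_{n=1}^∞ rₙ (1 − cos(n r)) ≥ c (1 − cos 1) (π/2)^{−2α} r^{2α}. -/

import Mathlib

open Real

lemma cos_one_lb' : (17/32 : ℝ) ≤ Real.cos 1 := by
  have h : Real.cos (1/2) ^ 2 = 1/2 + Real.cos (2 * (1/2)) / 2 := Real.cos_sq (1/2)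
  have h2 : (7/8 : ℝ) ≤ Real.cos (1/2) := by
    have := Real.one_sub_sq_div_two_le_cos (x := (1/2 : ℝ))
    norm_num at this; linarith
  norm_num at h
  nlinarith

lemma one_sub_cos_lb' {t : ℝ} (h0 : 0 ≤ t) (h1 : t ≤ π) :
    2/π^2 * t^2 ≤ 1 - Real.cos t := by
  have hπ := Real.pi_pos
  have hs : Real.sin (t/2) ^ 2 = 1/2 - Real.cos (2 * (t/2)) / 2 := Real.sin_sq_eq_half_sub (t/2)
  have h2t : 2 * (t/2) = t := by ring
  rw [h2t] at hs
  have hj : 2 / π * (t/2) ≤ Real.sin (t/2) := Real.mul_le_sin (by linarith) (by linarith)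
  have hq : (2 / π * (t/2))^2 ≤ Real.sin (t/2)^2 := by
    have : 0 ≤ 2 / π * (t/2) := by positivity
    nlinarith
  rw [hs] at hq
  have he : (2 / π * (t/2))^2 = t^2/π^2 := by field_simp
  rw [he] at hq
  have hπ2 : (0:ℝ) < π^2 := by positivity
  rw [div_le_iff₀ hπ2] at hq
  rw [div_mul_eq_mul_div, div_le_iff₀ hπ2]
  nlinarith

set_option maxHeartbeats 1000000 in
/-- lower bound part of Lemma `fBreg`. -/
theorem stmt_2 (α c : ℝ) (hα0 : 0 < α) (hα1 : α ≤ 1) (hc : 0 < c)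
    (n₀ : ℕ) (hn₀ : 1 ≤ n₀) (r : ℕ → ℝ) (hr : ∀ n, 1 ≤ n → 0 ≤ r n)
    (hsum : Summable r)
    (hlb : ∀ n, n₀ ≤ n → c * (n : ℝ) ^ (-2 * α - 1) ≤ r n) :
    ∀ x : ℝ, 0 < x → x ≤ min 0.035 (1 / (n₀ : ℝ)) →
      c * (1 - Real.cos 1) * (π / 2) ^ (-2 * α) * x ^ (2 * α) ≤
        2 * (∑' n : ℕ, r n * (1 - Real.cos ((n : ℝ) * x))) := by
  intro x hx hxle
  have hπ := Real.pi_pos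
  have hπ3 := Real.pi_gt_three
  have hx35 : x ≤ 0.035 := hxle.trans (min_le_left _ _)
  have hn₀pos : (0:ℝ) < n₀ := by exact_mod_cast hn₀
  have hxn₀ : x ≤ 1 / (n₀:ℝ) := hxle.trans (min_le_right _ _)
  have hn₀x : (n₀ : ℝ) ≤ 1 / x := by
    rw [le_div_iff₀ hx]
    rw [le_div_iff₀ hn₀pos] at hxn₀
    nlinarith
  -- the summand
  set S : ℕ → ℝ := fun n => r n * (1 - Real.cos ((n:ℝ) * x)) with hSdef
  have hSnn : ∀ n, 0 ≤ S n := by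
    intro n
    match n with
    | 0 => simp [hSdef]
    | (m+1) =>
      apply mul_nonneg (hr _ (Nat.succ_le_succ (Nat.zero_le m)))
      have := Real.cos_le_one (((m+1:ℕ):ℝ) * x)
      linarith
  have hSle : ∀ n, S n ≤ 2 * |r n| := by
    intro n
    match n with
    | 0 =>
      have : (0:ℝ) ≤ 2 * |r 0| := by positivity
      simpa [hSdef] using this
    | (m+1) =>
      have h1 : r (m+1) ≤ |r (m+1)| := le_abs_self _
      have h2 := Real.neg_one_le_cos (((m+1:ℕ):ℝ) * x)
      have h0 := hr (m+1) (Nat.succ_le_succ (Nat.zero_le m))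
      have h3 := Real.cos_le_one (((m+1:ℕ):ℝ) * x)
      simp only [hSdef]
      nlinarith
  have hsum2 : Summable (fun n => 2 * |r n|) := (summable_abs_iff.2 hsum).mul_left 2
  have hSsum : Summable S := Summable.of_nonneg_of_le hSnn hSle hsum2
  -- the cutoff N
  have hπx : (0:ℝ) < π / x := by positivity
  set N : ℕ := ⌊π / x⌋₊ with hN
  have hNub : (N:ℝ) ≤ π / x := Nat.floor_le hπx.le
  have hNlb : π / x - 1 ≤ (N:ℝ) := by
    have := Nat.lt_floor_add_one (π / x); linarith
  -- key rewriting of the LHS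
  have hxπpos : (0:ℝ) < x / π := by positivity
  have key : (π/2) ^ (-2*α) * x ^ (2*α) = (2:ℝ)^(2*α) * (x/π)^(2*α) := by
    rw [show (-2*α : ℝ) = -(2*α) by ring, Real.rpow_neg (by positivity),
        ← Real.inv_rpow (by positivity), inv_div,
        ← Real.mul_rpow (by positivity) hx.le,
        show (2/π*x : ℝ) = 2*(x/π) by ring,
        Real.mul_rpow (by norm_num) hxπpos.le]
  have hu : (0:ℝ) < (x/π) ^ (2*α) := Real.rpow_pos_of_pos hxπpos _
  have h2ann : (0:ℝ) ≤ (2:ℝ)^(2*α) := Real.rpow_nonneg (by norm_num) _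
  have hcos1 := cos_one_lb'
  have hcos1' := Real.cos_le_one 1
  rcases le_or_gt α (1/2) with hα2 | hα2
  · -- case α ≤ 1/2 : use n with n*x ∈ [π/2, π]
    set M : ℕ := ⌈π / (2*x)⌉₊ with hM
    have h2xpos : (0:ℝ) < 2*x := by linarith
    have hMlb : π/(2*x) ≤ (M:ℝ) := Nat.le_ceil _
    have hMub : (M:ℝ) < π/(2*x) + 1 := Nat.ceil_lt_add_one (by positivity)
    have hhalf : π / x = 2 * (π / (2*x)) := by field_simp
    have h2le : (2:ℝ) ≤ π/(2*x) := by
      rw [le_div_iff₀ h2xpos]; nlinarith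
    have hMN : M ≤ N := by
      have : (M:ℝ) ≤ (N:ℝ) := by linarith
      exact_mod_cast this
    have hcardR : π/(2*x) - 1 ≤ ((Finset.Icc M N).card : ℝ) := by
      rw [Nat.card_Icc, Nat.cast_sub (by omega)]
      push_cast
      linarith
    -- per-term lower bound
    have hterm : ∀ n ∈ Finset.Icc M N, c * (x/π) ^ (2*α+1) ≤ S n := by
      intro n hn
      obtain ⟨hn1, hn2⟩ := Finset.mem_Icc.1 hn
      have hn1R : (M:ℝ) ≤ (n:ℝ) := by exact_mod_cast hn1
      have hn2R : (n:ℝ) ≤ (N:ℝ) := by exact_mod_cast hn2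
      have hn₀n : n₀ ≤ n := by
        have h1 : (n₀:ℝ) ≤ π/(2*x) := by
          refine hn₀x.trans ?_
          rw [div_le_div_iff₀ hx h2xpos]
          nlinarith
        have : (n₀:ℝ) ≤ (n:ℝ) := by linarith
        exact_mod_cast this
      have hnpos : (0:ℝ) < n := by
        have : (1:ℕ) ≤ n := le_trans hn₀ hn₀n
        exact_mod_cast Nat.lt_of_lt_of_le Nat.zero_lt_one this
      have hnub : (n:ℝ) ≤ π/x := le_trans hn2R hNub
      have hnxπ : (n:ℝ) * x ≤ π := by
        rw [← le_div_iff₀ hx]; exact hnub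
      have hcos : Real.cos ((n:ℝ)*x) ≤ 0 := by
        apply Real.cos_nonpos_of_pi_div_two_le_of_le
        · have : π/(2*x) ≤ (n:ℝ) := hMlb.trans hn1R
          rw [div_le_iff₀ h2xpos] at this
          linarith
        · linarith
      have hrpow : (π/x) ^ (-2*α-1) ≤ (n:ℝ) ^ (-2*α-1) :=
        Real.rpow_le_rpow_of_nonpos hnpos hnub (by linarith)
      have heq : (π/x) ^ (-2*α-1) = (x/π) ^ (2*α+1) := by
        rw [show (-2*α-1 : ℝ) = -(2*α+1) by ring, Real.rpow_neg hπx.le,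
            ← Real.inv_rpow hπx.le, inv_div]
      calc c * (x/π)^(2*α+1) = c * (π/x)^(-2*α-1) := by rw [heq]
        _ ≤ c * (n:ℝ)^(-2*α-1) := by
            exact mul_le_mul_of_nonneg_left hrpow hc.le
        _ ≤ r n := hlb n hn₀n
        _ = r n * 1 := (mul_one _).symm
        _ ≤ r n * (1 - Real.cos ((n:ℝ)*x)) := by
            apply mul_le_mul_of_nonneg_left _ (hr n (le_trans hn₀ hn₀n))
            linarith
    have hsum1 : ((Finset.Icc M N).card : ℝ) * (c * (x/π)^(2*α+1)) ≤ ∑ n ∈ Finset.Icc M N, S n := by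
      simpa [nsmul_eq_mul] using Finset.card_nsmul_le_sum (Finset.Icc M N) S _ hterm
    have hsum3 : ∑ n ∈ Finset.Icc M N, S n ≤ ∑' n, S n :=
      Summable.sum_le_tsum _ (fun i _ => hSnn i) hSsum
    have hb : c * (x/π)^(2*α+1) = c * ((x/π)^(2*α) * (x/π)) := by
      rw [Real.rpow_add hxπpos, Real.rpow_one]
    have hbpos : (0:ℝ) ≤ c * ((x/π)^(2*α) * (x/π)) := by positivity
    have hchain : (π/(2*x) - 1) * (c * ((x/π)^(2*α) * (x/π))) ≤ ∑' n, S n := by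
      calc (π/(2*x) - 1) * (c * ((x/π)^(2*α) * (x/π)))
          ≤ ((Finset.Icc M N).card : ℝ) * (c * ((x/π)^(2*α) * (x/π))) :=
            mul_le_mul_of_nonneg_right hcardR hbpos
        _ = ((Finset.Icc M N).card : ℝ) * (c * (x/π)^(2*α+1)) := by rw [hb]
        _ ≤ ∑ n ∈ Finset.Icc M N, S n := hsum1
        _ ≤ ∑' n, S n := hsum3
    -- numeric closing
    have h2a : (2:ℝ)^(2*α) ≤ 2 := by
      calc (2:ℝ)^(2*α) ≤ (2:ℝ)^(1:ℝ) :=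
            Real.rpow_le_rpow_of_exponent_le one_le_two (by linarith)
        _ = 2 := Real.rpow_one 2
    have hA : (1 - Real.cos 1) * (2:ℝ)^(2*α) ≤ 15/16 := by nlinarith
    have hB : 2*x/π ≤ 1/16 := by
      rw [div_le_iff₀ hπ]; nlinarith
    have e1 : c * (1 - Real.cos 1) * (π/2)^(-2*α) * x^(2*α)
        = (1 - Real.cos 1) * (2:ℝ)^(2*α) * (c * (x/π)^(2*α)) := by
      rw [mul_assoc (c * (1 - Real.cos 1)), key]; ring
    rw [e1]
    calc (1 - Real.cos 1) * (2:ℝ)^(2*α) * (c * (x/π)^(2*α))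
        ≤ (1 - 2*x/π) * (c * (x/π)^(2*α)) := by
          apply mul_le_mul_of_nonneg_right _ (by positivity)
          linarith
      _ = 2 * ((π/(2*x) - 1) * (c * ((x/π)^(2*α) * (x/π)))) := by
          field_simp
      _ ≤ 2 * ∑' n, S n := by linarith
  · -- case α > 1/2 : use n ∈ [n₀, N] with the quadratic bound
    have hxne := hx.ne'
    have hπne := hπ.ne'
    have hn₀N : n₀ ≤ N := by
      apply Nat.le_floor
      refine hn₀x.trans ?_
      gcongr
      linarith
    have hcardR : π/x - 1/x ≤ ((Finset.Icc n₀ N).card : ℝ) := by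
      rw [Nat.card_Icc, Nat.cast_sub (by omega)]
      push_cast
      linarith
    set b₂ : ℝ := c * (2/π^2) * x^2 * (π/x)^(1-2*α) with hb₂
    have hterm : ∀ n ∈ Finset.Icc n₀ N, b₂ ≤ S n := by
      intro n hn
      obtain ⟨hn1, hn2⟩ := Finset.mem_Icc.1 hn
      have hn1' : 1 ≤ n := le_trans hn₀ hn1
      have hnpos : (0:ℝ) < n := by exact_mod_cast Nat.lt_of_lt_of_le Nat.zero_lt_one hn1'
      have hn2R : (n:ℝ) ≤ (N:ℝ) := by exact_mod_cast hn2
      have hnub : (n:ℝ) ≤ π/x := le_trans hn2R hNub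
      have hnx0 : 0 ≤ (n:ℝ)*x := by positivity
      have hnxπ : (n:ℝ)*x ≤ π := by rw [← le_div_iff₀ hx]; exact hnub
      have hq : 2/π^2 * ((n:ℝ)*x)^2 ≤ 1 - Real.cos ((n:ℝ)*x) := one_sub_cos_lb' hnx0 hnxπ
      have hrn : c * (n:ℝ)^(-2*α-1) ≤ r n := hlb n hn1
      have hsq : ((n:ℝ))^(1-2*α) = (n:ℝ)^(-2*α-1) * (n:ℝ)^(2:ℕ) := by
        rw [← Real.rpow_natCast (n:ℝ) 2, ← Real.rpow_add hnpos,
            show (-2*α-1+((2:ℕ):ℝ)) = 1-2*α by push_cast; ring]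
      have hrp : (π/x)^(1-2*α) ≤ (n:ℝ)^(1-2*α) :=
        Real.rpow_le_rpow_of_nonpos hnpos hnub (by linarith)
      have step1 : b₂ ≤ (c * (n:ℝ)^(-2*α-1)) * (2/π^2 * ((n:ℝ)*x)^2) := by
        have hcomb : (c * (n:ℝ)^(-2*α-1)) * (2/π^2 * ((n:ℝ)*x)^2)
            = c * (2/π^2) * x^2 * ((n:ℝ)^(1-2*α)) := by
          rw [hsq]; push_cast; ring
        rw [hcomb, hb₂]
        exact mul_le_mul_of_nonneg_left hrp (by positivity)
      refine step1.trans ?_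
      have hqnn : 0 ≤ 2/π^2 * ((n:ℝ)*x)^2 := by positivity
      exact mul_le_mul hrn hq hqnn (hr n hn1')
    have hsum1 : ((Finset.Icc n₀ N).card : ℝ) * b₂ ≤ ∑ n ∈ Finset.Icc n₀ N, S n := by
      simpa [nsmul_eq_mul] using Finset.card_nsmul_le_sum (Finset.Icc n₀ N) S _ hterm
    have hsum3 : ∑ n ∈ Finset.Icc n₀ N, S n ≤ ∑' n, S n :=
      Summable.sum_le_tsum _ (fun i _ => hSnn i) hSsum
    have hb2pos : 0 ≤ b₂ := by rw [hb₂]; positivity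
    have hchain : (π/x - 1/x) * b₂ ≤ ∑' n, S n :=
      le_trans (le_trans (mul_le_mul_of_nonneg_right hcardR hb2pos) hsum1) hsum3
    have hb2eq : b₂ = c * (2/π^2) * x^2 * ((π/x) * (x/π)^(2*α)) := by
      rw [hb₂, show (1-2*α:ℝ) = 1 + (-(2*α)) by ring, Real.rpow_add hπx, Real.rpow_one,
          Real.rpow_neg hπx.le, ← Real.inv_rpow hπx.le, inv_div]
    have h2a4 : (2:ℝ)^(2*α) ≤ 4 := by
      have h4 : (2:ℝ)^(2:ℝ) = 4 := by
        rw [show (2:ℝ) = ((2:ℕ):ℝ) by norm_num, Real.rpow_natCast]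
        norm_num
      calc (2:ℝ)^(2*α) ≤ (2:ℝ)^(2:ℝ) :=
            Real.rpow_le_rpow_of_exponent_le one_le_two (by linarith)
        _ = 4 := h4
    have hA : (1 - Real.cos 1) * (2:ℝ)^(2*α) ≤ 2 := by nlinarith
    have e1 : c * (1 - Real.cos 1) * (π/2)^(-2*α) * x^(2*α)
        = (1 - Real.cos 1) * (2:ℝ)^(2*α) * (c * (x/π)^(2*α)) := by
      rw [mul_assoc (c * (1 - Real.cos 1)), key]; ring
    rw [e1]
    calc (1 - Real.cos 1) * (2:ℝ)^(2*α) * (c * (x/π)^(2*α))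
        ≤ 2 * (c * (x/π)^(2*α)) := mul_le_mul_of_nonneg_right hA (by positivity)
      _ ≤ (4*(π-1)/π) * (c * (x/π)^(2*α)) := by
          apply mul_le_mul_of_nonneg_right _ (by positivity)
          rw [le_div_iff₀ hπ]; nlinarith
      _ = 2 * ((π/x - 1/x) * b₂) := by rw [hb2eq]; field_simp; ring
      _ ≤ 2 * ∑' n, S n := by linarith
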